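/- arXiv:math/9701221 — 2 statements merged into one kernel-verified Lean document; each statement's English description precedes it below -/
import Mathlib

section
/- Let τ: ℝ² \ {0} → ℝ², f(z₁) = z₁ with z₁ = x + iy ∈ ℂ, and consider f^{a}(z) = z^{a} for a positive integer a. On the set where |x| ≥ |y| and x ≠ 0, the ideal generated by Re(z^a) and Im(z^a) in continuous functions equals the ideal generated by x^a: i.e., Re(z^a) = x^a·u and Im(z^a) = x^a·v for continuous functions u, v with u² + v² never zero on that set. -/
/-- On the set `{|x| ≥ |y|, x ≠ 0} ⊆ ℝ²`, the ideal generated by `Re((x+iy)^a)` and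
`Im((x+iy)^a)` equals the ideal generated by `x^a`: there are continuous functions
`u, v` with `Re((x+iy)^a) = x^a·u`, `Im((x+iy)^a) = x^a·v` and `u² + v²` nowhere
zero on that set. -/
theorem pulled_back_ideal_invertible (a : ℕ) (ha : 1 ≤ a) :
    ∃ u v : ℝ × ℝ → ℝ,
      ContinuousOn u {p : ℝ × ℝ | |p.2| ≤ |p.1| ∧ p.1 ≠ 0} ∧
      ContinuousOn v {p : ℝ × ℝ | |p.2| ≤ |p.1| ∧ p.1 ≠ 0} ∧
      ∀ p : ℝ × ℝ, |p.2| ≤ |p.1| → p.1 ≠ 0 →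
        (((p.1 : ℂ) + (p.2 : ℂ) * Complex.I) ^ a).re = p.1 ^ a * u p ∧
        (((p.1 : ℂ) + (p.2 : ℂ) * Complex.I) ^ a).im = p.1 ^ a * v p ∧
        u p ^ 2 + v p ^ 2 ≠ 0 := by
  set w : ℝ × ℝ → ℂ := fun p => ((1 : ℂ) + ((p.2 / p.1 : ℝ) : ℂ) * Complex.I) ^ a with hw
  have hwc : ContinuousOn w {p : ℝ × ℝ | |p.2| ≤ |p.1| ∧ p.1 ≠ 0} := by
    apply ContinuousOn.pow
    apply ContinuousOn.add continuousOn_const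
    apply ContinuousOn.mul _ continuousOn_const
    apply Complex.continuous_ofReal.comp_continuousOn
    exact ContinuousOn.div (continuous_snd.continuousOn) (continuous_fst.continuousOn)
      (fun p hp => hp.2)
  refine ⟨fun p => (w p).re, fun p => (w p).im,
    Complex.continuous_re.comp_continuousOn hwc,
    Complex.continuous_im.comp_continuousOn hwc, fun p h hx => ?_⟩
  have hfac : ((p.1 : ℂ) + (p.2 : ℂ) * Complex.I) ^ a = (p.1 : ℂ) ^ a * w p := by
    rw [hw, ← mul_pow]
    congr 1
    have hx' : (p.1 : ℂ) ≠ 0 := Complex.ofReal_ne_zero.mpr hx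
    push_cast
    field_simp
  have hre : (((p.1 : ℂ) + (p.2 : ℂ) * Complex.I) ^ a).re = p.1 ^ a * (w p).re := by
    rw [hfac, ← Complex.ofReal_pow, Complex.re_ofReal_mul]
  have him : (((p.1 : ℂ) + (p.2 : ℂ) * Complex.I) ^ a).im = p.1 ^ a * (w p).im := by
    rw [hfac, ← Complex.ofReal_pow, Complex.im_ofReal_mul]
  refine ⟨hre, him, ?_⟩
  have : (w p).re ^ 2 + (w p).im ^ 2 = Complex.normSq (w p) := by
    simp [Complex.normSq_apply, sq]
  rw [this]
  simp only [hw, map_pow]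
  apply pow_ne_zero
  have : Complex.normSq ((1 : ℂ) + ((p.2 / p.1 : ℝ) : ℂ) * Complex.I)
      = 1 + (p.2 / p.1) ^ 2 := by
    simp [Complex.normSq_apply, sq]
  rw [this]
  positivity
end

section
/- Let f(x) = ∏_{i=1}^{k} xᵢ^{aᵢ} with aᵢ ≥ 1, and let R: {x ∈ ℝⁿ : xᵢ ≥ 0, i ≤ k} → {x : xᵢ ≥ 0, ∏_{i≤k} xᵢ = 0} × [0,∞) be R(x) = (x − δ(x)·e, f(x)) where δ(x) = min{x₁,…,x_k} (and the translate x − δ(x)·e is recorded in coordinates as in the paper). Then R is injective: if x, y are in the closed quadrant and x − δ(x)e = y − δ(y)e and f(x) = f(y), then x = y. -/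
lemma trivialization_aux (n k : ℕ) (hk : 1 ≤ k) (hkn : k ≤ n)
    (a : Fin n → ℕ) (ha : ∀ i : Fin n, (i : ℕ) < k → 1 ≤ a i)
    (x y : Fin n → ℝ)
    (hx : ∀ i : Fin n, (i : ℕ) < k → 0 ≤ x i)
    (c : ℝ) (hc : 0 < c)
    (hxy : ∀ i : Fin n, (i : ℕ) < k → y i = x i + c) :
    (∏ i ∈ Finset.univ.filter (fun i : Fin n => (i : ℕ) < k), x i ^ a i)
      < ∏ i ∈ Finset.univ.filter (fun i : Fin n => (i : ℕ) < k), y i ^ a i := by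
  set s := Finset.univ.filter (fun i : Fin n => (i : ℕ) < k) with hs
  have hmem : ∀ i : Fin n, i ∈ s ↔ (i : ℕ) < k := by
    intro i; simp [hs]
  have hne : s.Nonempty := ⟨⟨0, lt_of_lt_of_le hk hkn⟩, (hmem _).2 hk⟩
  have hylt : ∀ i ∈ s, x i < y i := by
    intro i hi
    rw [hxy i ((hmem i).1 hi)]
    linarith
  have hypos : ∀ i ∈ s, 0 < y i := by
    intro i hi
    exact lt_of_le_of_lt (hx i ((hmem i).1 hi)) (hylt i hi)
  have hpowlt : ∀ i ∈ s, x i ^ a i < y i ^ a i := by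
    intro i hi
    exact pow_lt_pow_left₀ (hylt i hi) (hx i ((hmem i).1 hi))
      (Nat.one_le_iff_ne_zero.1 (ha i ((hmem i).1 hi)))
  by_cases hz : ∃ i ∈ s, x i = 0
  · obtain ⟨i0, hi0, h0⟩ := hz
    have h1 : (∏ i ∈ s, x i ^ a i) = 0 := by
      refine Finset.prod_eq_zero hi0 ?_
      rw [h0]
      exact zero_pow (Nat.one_le_iff_ne_zero.1 (ha i0 ((hmem i0).1 hi0)))
    rw [h1]
    exact Finset.prod_pos fun i hi => pow_pos (hypos i hi) _
  · push_neg at hz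
    refine Finset.prod_lt_prod_of_nonempty ?_ hpowlt hne
    intro i hi
    exact pow_pos (lt_of_le_of_ne (hx i ((hmem i).1 hi)) (Ne.symm (hz i hi))) _

/-- Injectivity of the local trivialization `R(x) = (x − δ(x)·e, f(x))` on the closed
positive quadrant, where `δ(x) = min{x₁,…,x_k}`, `e = e₁ + ⋯ + e_k`, and
`f(x) = ∏_{i≤k} xᵢ^{aᵢ}` with all `aᵢ ≥ 1`. -/
theorem trivialization_injective (n k : ℕ) (hk : 1 ≤ k) (hkn : k ≤ n)
    (a : Fin n → ℕ) (ha : ∀ i : Fin n, (i : ℕ) < k → 1 ≤ a i)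
    (δ : (Fin n → ℝ) → ℝ)
    (hδ : ∀ x, δ x = sInf {y | ∃ i : Fin n, (i : ℕ) < k ∧ y = x i})
    (x y : Fin n → ℝ)
    (hx : ∀ i : Fin n, (i : ℕ) < k → 0 ≤ x i)
    (hy : ∀ i : Fin n, (i : ℕ) < k → 0 ≤ y i)
    (hr : (fun j : Fin n => if (j : ℕ) < k then x j - δ x else x j)
        = (fun j : Fin n => if (j : ℕ) < k then y j - δ y else y j))
    (hf : (∏ i ∈ Finset.univ.filter (fun i : Fin n => (i : ℕ) < k), x i ^ a i)
        = ∏ i ∈ Finset.univ.filter (fun i : Fin n => (i : ℕ) < k), y i ^ a i) :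
    x = y := by
  have hri : ∀ j : Fin n, (j : ℕ) < k → x j - δ x = y j - δ y := by
    intro j hj
    have := congrFun hr j
    simpa [hj] using this
  have hro : ∀ j : Fin n, ¬ (j : ℕ) < k → x j = y j := by
    intro j hj
    have := congrFun hr j
    simpa [hj] using this
  have hd : δ x = δ y := by
    rcases lt_trichotomy (δ x) (δ y) with h | h | h
    · exfalso
      have := trivialization_aux n k hk hkn a ha x y hx (δ y - δ x) (by linarith)
        (fun i hi => by have := hri i hi; linarith)
      exact absurd hf (ne_of_lt this)
    · exact h
    · exfalso
      have := trivialization_aux n k hk hkn a ha y x hy (δ x - δ y) (by linarith)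
        (fun i hi => by have := hri i hi; linarith)
      exact absurd hf.symm (ne_of_lt this)
  funext j
  by_cases hj : (j : ℕ) < k
  · have := hri j hj; linarith [hd]
  · exact hro j hj
end
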